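/- Let fL, fU, g_j (j = 1,…,m) be convex real-valued functions on ℝⁿ with fL ≤ fU pointwise, suppose the Slater condition holds (there exists x̂ with g_j(x̂) < 0 for all j), let X = {x : g_j(x) ≤ 0 ∀j}, 0 ≤ εL ≤ εU, and x* ∈ X. If there exist μL, μU ≥ 0 with μL + μU = 1, ε_0 ≥ 0, ε_j ≥ 0, λ_j ≥ 0 (j=1,…,m) such that 0 ∈ ∂_{ε_0}(μL·fL + μU·fU)(x*) + Σ_j ∂_{ε_j}(λ_j g_j)(x*) and Σ_{j=0}^m ε_j − μL·εU − μU·εL ≤ Σ_j λ_j g_j(x*), then μL·fL(x) + μU·fU(x) ≥ μL·fL(x*) + μU·fU(x*) − (μL·εU + μU·εL) for all x ∈ X, and consequently x* is a weakly E-LU-solution of the interval problem. -/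

import Mathlib

/-- The ε-subdifferential of φ at x*. -/
def epsSubdiff {n : ℕ} (φ : EuclideanSpace ℝ (Fin n) → ℝ) (ε : ℝ)
    (xs : EuclideanSpace ℝ (Fin n)) : Set (EuclideanSpace ℝ (Fin n)) :=
  {v | ∀ x, φ x - φ xs ≥ (inner ℝ v (x - xs) : ℝ) - ε}

theorem KKT_sufficient_weakly_E_LU (n m : ℕ)
    (fL fU : EuclideanSpace ℝ (Fin n) → ℝ)
    (hfL : ConvexOn ℝ Set.univ fL) (hfU : ConvexOn ℝ Set.univ fU)
    (hf : ∀ x, fL x ≤ fU x)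
    (g : Fin m → EuclideanSpace ℝ (Fin n) → ℝ)
    (hg : ∀ j, ConvexOn ℝ Set.univ (g j))
    (hSlater : ∃ xh, ∀ j, g j xh < 0)
    (εL εU : ℝ) (hεL : 0 ≤ εL) (hε : εL ≤ εU)
    (xs : EuclideanSpace ℝ (Fin n)) (hxs : ∀ j, g j xs ≤ 0)
    (μL μU : ℝ) (hμL : 0 ≤ μL) (hμU : 0 ≤ μU) (hμ : μL + μU = 1)
    (ε0 : ℝ) (hε0 : 0 ≤ ε0) (εj : Fin m → ℝ) (hεj : ∀ j, 0 ≤ εj j)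
    (lam : Fin m → ℝ) (hlam : ∀ j, 0 ≤ lam j)
    (hsub : ∃ v0 ∈ epsSubdiff (fun x => μL * fL x + μU * fU x) ε0 xs,
      ∃ v : Fin m → EuclideanSpace ℝ (Fin n),
        (∀ j, v j ∈ epsSubdiff (fun x => lam j * g j x) (εj j) xs) ∧
        v0 + ∑ j, v j = 0)
    (hineq : ε0 + ∑ j, εj j - μL * εU - μU * εL ≤ ∑ j, lam j * g j xs) :
    (∀ x, (∀ j, g j x ≤ 0) →
      μL * fL x + μU * fU x ≥ μL * fL xs + μU * fU xs - (μL * εU + μU * εL)) ∧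
    ¬ ∃ x, (∀ j, g j x ≤ 0) ∧ fL x < fL xs - εU ∧ fU x < fU xs - εL := by
  obtain ⟨v0, hv0, v, hv, hsum⟩ := hsub
  have main : ∀ x, (∀ j, g j x ≤ 0) →
      μL * fL x + μU * fU x ≥ μL * fL xs + μU * fU xs - (μL * εU + μU * εL) := by
    intro x hx
    have h0 := hv0 x
    have hj : ∀ j, lam j * g j x - lam j * g j xs ≥
        (inner ℝ (v j) (x - xs) : ℝ) - εj j := fun j => hv j x
    have hsumj : (∑ j, (lam j * g j x - lam j * g j xs)) ≥
        (∑ j, ((inner ℝ (v j) (x - xs) : ℝ) - εj j)) :=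
      Finset.sum_le_sum (fun j _ => hj j)
    have hip : (inner ℝ v0 (x - xs) : ℝ) + ∑ j, (inner ℝ (v j) (x - xs) : ℝ) = 0 := by
      have : (inner ℝ (v0 + ∑ j, v j) (x - xs) : ℝ) = 0 := by
        rw [hsum]; simp
      rw [inner_add_left, sum_inner] at this
      exact this
    have hsplit : (∑ j, ((inner ℝ (v j) (x - xs) : ℝ) - εj j))
        = (∑ j, (inner ℝ (v j) (x - xs) : ℝ)) - ∑ j, εj j := Finset.sum_sub_distrib _ _
    have hsplit2 : (∑ j, (lam j * g j x - lam j * g j xs))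
        = (∑ j, lam j * g j x) - ∑ j, lam j * g j xs := Finset.sum_sub_distrib _ _
    have hnp : (∑ j, lam j * g j x) ≤ 0 :=
      Finset.sum_nonpos (fun j _ => mul_nonpos_of_nonneg_of_nonpos (hlam j) (hx j))
    simp only at h0
    linarith [h0, hsumj, hip, hineq]
  refine ⟨main, ?_⟩
  rintro ⟨x, hx, h1, h2⟩
  have := main x hx
  have hpos : 0 < μL ∨ 0 < μU := by
    rcases hμL.lt_or_eq with h | h
    · exact Or.inl h
    · right; nlinarith
  rcases hpos with h | h
  · nlinarith [mul_le_mul_of_nonneg_left (hf x) hμU, mul_lt_mul_of_pos_left h1 h,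
      mul_le_mul_of_nonneg_left h2.le hμU]
  · nlinarith [mul_lt_mul_of_pos_left h2 h, mul_le_mul_of_nonneg_left h1.le hμL]
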